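/- The tower number 𝔱 equals the bounding number 𝔟 if and only if there exists an unbounded tower of cardinality 𝔱. -/

import Mathlib

def EvLE (f g : ℕ → ℕ) : Prop := ∀ᶠ n in Filter.atTop, f n ≤ g n

/-- A family `S ⊆ ω^ω` is unbounded with respect to eventual domination. -/
def Ubdd (S : Set (ℕ → ℕ)) : Prop := ¬ ∃ g : ℕ → ℕ, ∀ f ∈ S, EvLE f g

/-- The bounding number 𝔟. -/
noncomputable def bNum : Cardinal :=
  sInf {c : Cardinal | ∃ S : Set (ℕ → ℕ), Ubdd S ∧ Cardinal.mk S = c}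

/-- The increasing enumeration of a subset of ℕ. -/
noncomputable def enumOf (A : Set ℕ) : ℕ → ℕ := Nat.nth (· ∈ A)

/-- `A ⊆* B` : inclusion modulo a finite set. -/
def AlmostSubset (A B : Set ℕ) : Prop := (A \ B).Finite

/-- An unbounded tower of cardinality κ, indexed by the ordinals below κ. -/
def IsUnboundedTower (κ : Cardinal) (T : {α : Ordinal // α < κ.ord} → Set ℕ) : Prop :=
  (∀ α, (T α).Infinite) ∧
  (∀ α β, α < β → AlmostSubset (T β) (T α)) ∧
  (∀ α β, α < β → ¬ AlmostSubset (T α) (T β)) ∧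
  Ubdd (Set.range fun α => enumOf (T α))

/-- A ⊆*-decreasing family of infinite sets of length κ with no infinite
pseudo-intersection. -/
def IsMaximalTower (κ : Cardinal) (T : {α : Ordinal // α < κ.ord} → Set ℕ) : Prop :=
  (∀ α, (T α).Infinite) ∧
  (∀ α β, α < β → AlmostSubset (T β) (T α)) ∧
  ¬ ∃ A : Set ℕ, A.Infinite ∧ ∀ α, AlmostSubset A (T α)

/-- The tower number 𝔱. -/
noncomputable def tNum : Cardinal :=
  sInf {κ : Cardinal | ∃ T : {α : Ordinal // α < κ.ord} → Set ℕ, IsMaximalTower κ T}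

/-! ### Auxiliary lemmas -/

/-- monotone majorant -/
def mstar (f : ℕ → ℕ) (n : ℕ) : ℕ := (Finset.range (n+1)).sup f

lemma le_mstar (f : ℕ → ℕ) {k n : ℕ} (h : k ≤ n) : f k ≤ mstar f n :=
  Finset.le_sup (Finset.mem_range.2 (Nat.lt_succ_of_le h))

lemma AlmostSubset.refl (A : Set ℕ) : AlmostSubset A A := by simp [AlmostSubset]

lemma AlmostSubset.trans {A B C : Set ℕ} (h1 : AlmostSubset A B) (h2 : AlmostSubset B C) :
    AlmostSubset A C := by
  have : A \ C ⊆ (A \ B) ∪ (B \ C) := by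
    intro x hx
    by_cases hB : x ∈ B
    · exact Or.inr ⟨hB, hx.2⟩
    · exact Or.inl ⟨hx.1, hB⟩
  exact Set.Finite.subset (h1.union h2) this

open Classical in
lemma count_le_count {A B : Set ℕ} (h : A ⊆ B) (m : ℕ) :
    Nat.count (· ∈ A) m ≤ Nat.count (· ∈ B) m := by
  rw [Nat.count_eq_card_filter_range, Nat.count_eq_card_filter_range]
  apply Finset.card_le_card
  intro x hx
  simp only [Finset.mem_filter] at *
  exact ⟨hx.1, h hx.2⟩

open Classical in
lemma count_le_count_add {A B : Set ℕ} (hfin : (A \ B).Finite) (m : ℕ) :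
    Nat.count (· ∈ A) m ≤ Nat.count (· ∈ B) m + hfin.toFinset.card := by
  rw [Nat.count_eq_card_filter_range, Nat.count_eq_card_filter_range]
  have hsub : (Finset.range m).filter (· ∈ A) ⊆
      ((Finset.range m).filter (· ∈ B)) ∪ hfin.toFinset := by
    intro x hx
    simp only [Finset.mem_filter, Finset.mem_union, Set.Finite.mem_toFinset,
      Set.mem_diff] at *
    by_cases hB : x ∈ B
    · exact Or.inl ⟨hx.1, hB⟩
    · exact Or.inr ⟨hx.2, hB⟩
  calc ((Finset.range m).filter (· ∈ A)).card
      ≤ (((Finset.range m).filter (· ∈ B)) ∪ hfin.toFinset).card := Finset.card_le_card hsub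
    _ ≤ ((Finset.range m).filter (· ∈ B)).card + hfin.toFinset.card := Finset.card_union_le _ _

open Classical in
/-- shift lemma: if `A ⊆* B` then the enumeration of `B` is dominated by a shift
of the enumeration of `A`. -/
lemma enumOf_shift {A B : Set ℕ} (hA : A.Infinite) (h : AlmostSubset A B) :
    ∃ j : ℕ, ∀ n, enumOf B n ≤ enumOf A (n + j) := by
  refine ⟨h.toFinset.card, fun n => ?_⟩
  set j := h.toFinset.card
  have h1 : Nat.count (· ∈ A) (enumOf A (n + j) + 1) = n + j + 1 :=
    Nat.count_nth_succ_of_infinite (p := (· ∈ A)) hA _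
  have h2 : Nat.count (· ∈ A) (enumOf A (n+j) + 1) ≤
      Nat.count (· ∈ B) (enumOf A (n+j) + 1) + j := count_le_count_add h _
  have h3 : n < Nat.count (· ∈ B) (enumOf A (n+j) + 1) := by omega
  exact Nat.le_of_lt_succ (Nat.nth_lt_of_lt_count h3)

lemma enumOf_range {u : ℕ → ℕ} (hu : StrictMono u) : ∀ n, enumOf (Set.range u) n = u n := by
  classical
  intro n
  have hcount : Nat.count (· ∈ Set.range u) (u n) = n := by
    rw [Nat.count_eq_card_filter_range]
    have : (Finset.range (u n)).filter (· ∈ Set.range u) = (Finset.range n).image u := by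
      ext x
      simp only [Finset.mem_filter, Finset.mem_range, Finset.mem_image, Set.mem_range]
      constructor
      · rintro ⟨hlt, m, rfl⟩
        exact ⟨m, hu.lt_iff_lt.1 hlt, rfl⟩
      · rintro ⟨m, hm, rfl⟩
        exact ⟨hu.lt_iff_lt.2 hm, m, rfl⟩
    rw [this, Finset.card_image_of_injective _ hu.injective, Finset.card_range]
  have := Nat.nth_count (p := (· ∈ Set.range u)) (n := u n) ⟨n, rfl⟩
  rw [hcount] at this
  exact this

/-- thinning an infinite set to dominate a given function, leaving an infinite remainder -/
lemma thin (P : Set ℕ) (hP : P.Infinite) (h : ℕ → ℕ) :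
    ∃ X : Set ℕ, X ⊆ P ∧ X.Infinite ∧ (P \ X).Infinite ∧ ∀ n, h n ≤ enumOf X n := by
  classical
  let y : ℕ → ℕ := fun n => Nat.rec (h 0) (fun m ym => max (ym + 2) (h (m+1))) n
  have hy0 : ∀ n, h n ≤ y n := by
    intro n; cases n with
    | zero => exact le_refl _
    | succ m => exact le_max_right _ _
  have hygap : ∀ n, y n + 2 ≤ y (n+1) := fun n => le_max_left _ _
  have hymono : StrictMono y := strictMono_nat_of_lt_succ (fun n => by have := hygap n; omega)
  let u : ℕ → ℕ := fun n => enumOf P (y n)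
  have hP' : (setOf (· ∈ P)).Infinite := hP
  have humono : StrictMono u := fun a b hab => (Nat.nth_lt_nth hP').2 (hymono hab)
  refine ⟨Set.range u, ?_, ?_, ?_, ?_⟩
  · rintro x ⟨n, rfl⟩; exact Nat.nth_mem_of_infinite hP' _
  · exact Set.infinite_range_of_injective humono.injective
  · apply Set.infinite_of_injective_forall_mem
      (f := fun n : ℕ => Nat.nth (· ∈ P) (y n + 1))
    · intro a b hab
      have := Nat.nth_injective hP' hab
      have : y a = y b := by omega
      exact hymono.injective this
    · intro n
      refine ⟨Nat.nth_mem_of_infinite hP' _, ?_⟩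
      rintro ⟨m, hm⟩
      have he : y m = y n + 1 := Nat.nth_injective hP' hm
      rcases le_or_gt m n with hmn | hmn
      · have h2 := hymono.monotone hmn; omega
      · have h2 := hygap n
        have h3 : y (n+1) ≤ y m := hymono.monotone (Nat.succ_le_of_lt hmn)
        omega
  · intro n
    rw [enumOf_range humono]
    calc h n ≤ y n := hy0 n
      _ ≤ enumOf P (y n) := Nat.le_nth (fun hf => absurd hf hP)

open Ordinal in
/-- Key lemma: a ⊆*-decreasing family of infinite sets of length `< 𝔱` has an
infinite pseudo-intersection. -/
lemma exists_pseudoInt {o : Ordinal} (ho : o.card < tNum)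
    (X : ∀ β, β < o → Set ℕ)
    (hinf : ∀ β hβ, (X β hβ).Infinite)
    (hdec : ∀ β γ (hβ : β < o) (hγ : γ < o), β < γ → AlmostSubset (X γ hγ) (X β hβ)) :
    ∃ A : Set ℕ, A.Infinite ∧ ∀ β hβ, AlmostSubset A (X β hβ) := by
  by_contra hA
  push_neg at hA
  rcases eq_or_ne o 0 with rfl | h0
  · obtain ⟨β, hβ, -⟩ := hA Set.univ Set.infinite_univ
    exact (not_lt_zero hβ).elim
  · obtain ⟨f, hf⟩ := Ordinal.exists_fundamental_sequence o
    set T : {i : Ordinal // i < (o.cof).ord} → Set ℕ :=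
      fun i => X (f i.1 i.2) (hf.lt i.2) with hT
    have hmax : IsMaximalTower o.cof T := by
      refine ⟨fun i => hinf _ _, fun i j hij => hdec _ _ _ _ (hf.strict_mono _ _ hij), ?_⟩
      rintro ⟨A, hAinf, hAsub⟩
      obtain ⟨β, hβ, hbad⟩ := hA A hAinf
      apply hbad
      have hβ' : β < Ordinal.blsub _ f := by rw [hf.blsub_eq]; exact hβ
      obtain ⟨i, hi, hβle⟩ := Ordinal.lt_blsub_iff.1 hβ'
      rcases eq_or_lt_of_le hβle with heq | hlt
      · subst heq
        exact hAsub ⟨i, hi⟩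
      · exact (hAsub ⟨i, hi⟩).trans (hdec _ _ _ _ hlt)
    have hle : tNum ≤ o.cof := csInf_le (OrderBot.bddBelow _) ⟨T, hmax⟩
    have : o.cof ≤ o.card := Ordinal.cof_le_card o
    exact absurd (hle.trans this) (not_le_of_gt ho)

/-! ### The recursive construction -/

def Good (F : Ordinal → ℕ → ℕ) (α : Ordinal) (prev : ∀ β, β < α → Set ℕ)
    (X : Set ℕ) : Prop :=
  X.Infinite ∧
  (∀ β (hβ : β < α), AlmostSubset X (prev β hβ) ∧ ((prev β hβ) \ X).Infinite) ∧
  (∀ n, mstar (F α) (2^n) ≤ enumOf X n)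

open Classical in
noncomputable def buildF (F : Ordinal → ℕ → ℕ) : Ordinal → Set ℕ :=
  WellFounded.fix Ordinal.lt_wf (fun α ih =>
    if h : ∃ X : Set ℕ, Good F α ih X then h.choose else ∅)

open Classical in
lemma buildF_def (F : Ordinal → ℕ → ℕ) (α : Ordinal) :
    buildF F α =
      if h : ∃ X : Set ℕ, Good F α (fun β _ => buildF F β) X then h.choose else ∅ :=
  WellFounded.fix_eq _ _ _

lemma buildF_good (F : Ordinal → ℕ → ℕ) :
    ∀ α : Ordinal, α.card < tNum → Good F α (fun β _ => buildF F β) (buildF F α) := by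
  intro α
  induction α using Ordinal.induction with
  | h α IH =>
    intro hα
    have hIH : ∀ β (hβ : β < α), Good F β (fun γ _ => buildF F γ) (buildF F β) :=
      fun β hβ => IH β hβ (lt_of_le_of_lt (Ordinal.card_le_card hβ.le) hα)
    have hex : ∃ X : Set ℕ, Good F α (fun β _ => buildF F β) X := by
      obtain ⟨P, hPinf, hPsub⟩ := exists_pseudoInt hα (fun β _ => buildF F β)
        (fun β hβ => (hIH β hβ).1)
        (fun β γ hβ hγ hβγ => ((hIH γ hγ).2.1 β hβγ).1)
      obtain ⟨X, hXP, hXinf, hPX, hXdom⟩ := thin P hPinf (fun n => mstar (F α) (2^n))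
      refine ⟨X, hXinf, fun β hβ => ⟨?_, ?_⟩, hXdom⟩
      · exact Set.Finite.subset (hPsub β hβ) (fun x hx => ⟨hXP hx.1, hx.2⟩)
      · refine (Set.Infinite.diff hPX (hPsub β hβ)).mono ?_
        rintro x ⟨⟨hxP, hxX⟩, hx2⟩
        refine ⟨?_, hxX⟩
        by_contra hb
        exact hx2 ⟨hxP, hb⟩
    rw [buildF_def, dif_pos hex]
    exact hex.choose_spec

open Classical in
/-- The tower construction: for any `κ ≤ 𝔱` and any κ-indexed family of functions,
there is a strictly ⊆*-decreasing κ-tower whose enumerations strongly dominate the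
given functions. -/
lemma exists_tower {κ : Cardinal} (hκ : κ ≤ tNum) (f : {α : Ordinal // α < κ.ord} → ℕ → ℕ) :
    ∃ T : {α : Ordinal // α < κ.ord} → Set ℕ,
      (∀ α, (T α).Infinite) ∧
      (∀ α β, α < β → AlmostSubset (T β) (T α)) ∧
      (∀ α β, α < β → ((T α) \ (T β)).Infinite) ∧
      (∀ α n, mstar (f α) (2^n) ≤ enumOf (T α) n) := by
  set F : Ordinal → ℕ → ℕ := fun α => if h : α < κ.ord then f ⟨α, h⟩ else fun _ => 0 with hF
  have hg : ∀ α : {α : Ordinal // α < κ.ord},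
      Good F α.1 (fun β _ => buildF F β) (buildF F α.1) :=
    fun α => buildF_good F α.1 (lt_of_lt_of_le (Cardinal.lt_ord.1 α.2) hκ)
  refine ⟨fun α => buildF F α.1, fun α => (hg α).1,
    fun α β hab => ((hg β).2.1 α.1 hab).1,
    fun α β hab => ((hg β).2.1 α.1 hab).2,
    fun α n => ?_⟩
  have h := (hg α).2.2 n
  rw [hF] at h
  simp only [α.2, dif_pos] at h
  exact h

/-! ### 𝔟 facts and universe transfer -/

universe u

def tSet : Set Cardinal.{u} :=
  {κ : Cardinal | ∃ T : {α : Ordinal // α < κ.ord} → Set ℕ, IsMaximalTower κ T}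

lemma tNum_def : tNum.{u} = sInf tSet.{u} := rfl

lemma ubdd_univ : Ubdd (Set.univ : Set (ℕ → ℕ)) := by
  rintro ⟨g, hg⟩
  obtain ⟨n, hn⟩ := (hg (fun n => g n + 1) (Set.mem_univ _)).exists
  exact Nat.not_succ_le_self (g n) hn

lemma bSet_nonempty :
    {c : Cardinal | ∃ S : Set (ℕ → ℕ), Ubdd S ∧ Cardinal.mk S = c}.Nonempty :=
  ⟨Cardinal.mk (Set.univ : Set (ℕ → ℕ)), ⟨Set.univ, ubdd_univ, rfl⟩⟩

lemma exists_ubdd_family : ∃ S : Set (ℕ → ℕ), Ubdd S ∧ Cardinal.mk S = bNum :=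
  csInf_mem bSet_nonempty

lemma one_le_bNum : 1 ≤ bNum := by
  apply le_csInf bSet_nonempty
  rintro c ⟨S, hS, rfl⟩
  rw [Cardinal.one_le_iff_ne_zero, Cardinal.mk_ne_zero_iff]
  by_contra hempty
  exact hS ⟨fun _ => 0, fun f hf => absurd (Nonempty.intro ⟨f, hf⟩) hempty⟩

lemma bNum_ne_zero : bNum ≠ 0 := Cardinal.one_le_iff_ne_zero.1 one_le_bNum

lemma index_card (κ : Cardinal.{u}) :
    Cardinal.mk {α : Ordinal.{u} // α < κ.ord} = Cardinal.lift.{u+1} κ := by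
  have := Ordinal.mk_Iio_ordinal κ.ord
  rwa [Cardinal.card_ord] at this

lemma index_equiv {S : Set (ℕ → ℕ)} {κ : Cardinal.{u}} (h : Cardinal.mk S = bNum)
    (hκ : κ = Cardinal.lift.{u} bNum) :
    Nonempty ({α : Ordinal.{u} // α < κ.ord} ≃ S) := by
  rw [← Cardinal.lift_mk_eq', index_card, hκ, ← h]
  simp [Cardinal.lift_lift]

/-- mutually inverse order-preserving maps between the lifted and unlifted index types -/
lemma index_maps (κ₀ : Cardinal.{0}) :
    ∃ (l : {β : Ordinal.{0} // β < κ₀.ord} →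
          {α : Ordinal.{u} // α < (Cardinal.lift.{u} κ₀).ord})
      (d : {α : Ordinal.{u} // α < (Cardinal.lift.{u} κ₀).ord} →
          {β : Ordinal.{0} // β < κ₀.ord}),
      (∀ x y, x < y ↔ l x < l y) ∧ (∀ x, d (l x) = x) ∧ (∀ x, l (d x) = x) := by
  have hord : (Cardinal.lift.{u} κ₀).ord = Ordinal.lift.{u} κ₀.ord :=
    (Cardinal.lift_ord κ₀).symm
  have hlt : ∀ x : {α : Ordinal.{u} // α < (Cardinal.lift.{u} κ₀).ord},
      ∃ a' < κ₀.ord, Ordinal.lift.{u} a' = x.1 := by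
    intro x
    exact Ordinal.lt_lift_iff.1 (hord ▸ x.2)
  refine ⟨fun β => ⟨Ordinal.lift.{u} β.1, by rw [hord]; exact Ordinal.lift_lt.2 β.2⟩,
    fun x => ⟨(hlt x).choose, (hlt x).choose_spec.1⟩, ?_, ?_, ?_⟩
  · intro x y
    constructor
    · exact fun hxy => Subtype.mk_lt_mk.2 (Ordinal.lift_lt.2 hxy)
    · intro hxy
      exact Subtype.coe_lt_coe.1 (Ordinal.lift_lt.1 (Subtype.mk_lt_mk.1 hxy))
  · intro x
    apply Subtype.ext
    exact Ordinal.lift_inj.1 ((hlt _).choose_spec.2)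
  · intro x
    apply Subtype.ext
    exact (hlt x).choose_spec.2

lemma tSet_ascent {κ₀ : Cardinal.{0}} (h : κ₀ ∈ tSet.{0}) :
    Cardinal.lift.{u} κ₀ ∈ tSet.{u} := by
  obtain ⟨T₀, hinf, hdec, hmax⟩ := h
  obtain ⟨l, d, hiso, hdl, hld⟩ := index_maps.{u} κ₀
  refine ⟨fun x => T₀ (d x), fun x => hinf _, fun x y hxy => ?_, ?_⟩
  · apply hdec
    have hl : l (d x) < l (d y) := by rw [hld x, hld y]; exact hxy
    exact (hiso _ _).2 hl
  · rintro ⟨A, hA, hsub⟩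
    apply hmax
    refine ⟨A, hA, fun β => ?_⟩
    simpa [hdl β] using hsub (l β)

lemma tSet_descent {κ₀ : Cardinal.{0}} (h : Cardinal.lift.{u} κ₀ ∈ tSet.{u}) :
    κ₀ ∈ tSet.{0} := by
  obtain ⟨T, hinf, hdec, hmax⟩ := h
  obtain ⟨l, d, hiso, hdl, hld⟩ := index_maps.{u} κ₀
  refine ⟨fun β => T (l β), fun β => hinf _, fun x y hxy => hdec _ _ ((hiso _ _).1 hxy), ?_⟩
  rintro ⟨A, hA, hsub⟩
  apply hmax
  refine ⟨A, hA, fun x => ?_⟩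
  simpa [hld x] using hsub (d x)

lemma two_mul_le_two_pow {k : ℕ} (h : 2 ≤ k) : 2 * k ≤ 2 ^ k := by
  induction k with
  | zero => omega
  | succ m IH =>
    rcases Nat.lt_or_ge m 2 with hm | hm
    · interval_cases m <;> omega
    · have h1 := IH (by omega)
      have h2 : 2 ≤ 2 ^ m := Nat.one_lt_two_pow (by omega)
      rw [pow_succ]
      omega

lemma arith_aux {j m : ℕ} (hm : max (2*j) (j+2) ≤ m) : m ≤ 2 ^ (m - j) := by
  have h1 : 2 ≤ m - j := by omega
  have := two_mul_le_two_pow h1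
  omega

/-- 𝔱 ≤ 𝔟 (universe-polymorphic form) -/
lemma tNum_le_lift_bNum : tNum.{u} ≤ Cardinal.lift.{u} bNum := by
  by_contra hlt
  push_neg at hlt
  obtain ⟨S, hS, hmk⟩ := exists_ubdd_family
  obtain ⟨e⟩ := index_equiv (κ := Cardinal.lift.{u} bNum) hmk rfl
  obtain ⟨T, hTinf, hTdec, hTstrict, hTdom⟩ :=
    exists_tower (κ := Cardinal.lift.{u} bNum) hlt.le (fun α => (e α : ℕ → ℕ))
  obtain ⟨A, hAinf, hAsub⟩ := exists_pseudoInt (o := (Cardinal.lift.{u} bNum).ord)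
      (by rwa [Cardinal.card_ord])
      (fun β hβ => T ⟨β, hβ⟩) (fun β hβ => hTinf _)
      (fun β γ hβ hγ hbg => hTdec ⟨β, hβ⟩ ⟨γ, hγ⟩ hbg)
  apply hS
  refine ⟨enumOf A, fun s hs => ?_⟩
  set α := e.symm ⟨s, hs⟩ with hα
  have hsα : (e α : ℕ → ℕ) = s := by rw [hα, Equiv.apply_symm_apply]
  obtain ⟨j, hj⟩ := enumOf_shift hAinf (hAsub α.1 α.2)
  rw [EvLE, Filter.eventually_atTop]
  refine ⟨max (2*j) (j+2), fun m hm => ?_⟩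
  have harith : m ≤ 2 ^ (m - j) := arith_aux hm
  calc s m = (e α : ℕ → ℕ) m := by rw [hsα]
    _ ≤ mstar (e α : ℕ → ℕ) (2 ^ (m - j)) := le_mstar _ harith
    _ ≤ enumOf (T α) (m - j) := hTdom α (m - j)
    _ ≤ enumOf A (m - j + j) := hj (m - j)
    _ = enumOf A m := by congr 1; omega

lemma tNum_le_bNum : tNum.{0} ≤ bNum := by
  have := tNum_le_lift_bNum.{0}
  rwa [Cardinal.lift_id] at this

lemma tSet_nonempty_of_ne_zero (h : tNum.{u} ≠ 0) : tSet.{u}.Nonempty := by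
  by_contra hne
  rw [Set.not_nonempty_iff_eq_empty] at hne
  apply h
  rw [tNum_def, hne, Cardinal.sInf_empty]

/-- every member of `tSet.{u}` is at least `lift tNum.{0}` -/
lemma lift_tNum_le_mem {κ : Cardinal.{u}} (h : κ ∈ tSet.{u}) :
    Cardinal.lift.{u} tNum.{0} ≤ κ := by
  rcases le_or_gt (Cardinal.lift.{u} tNum.{0}) κ with hle | hlt
  · exact hle
  · obtain ⟨κ₀, rfl⟩ := Cardinal.mem_range_lift_of_le hlt.le
    have h0 : κ₀ ∈ tSet.{0} := tSet_descent h
    have hκ : tNum.{0} ≤ κ₀ := csInf_le (OrderBot.bddBelow _) h0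
    exact Cardinal.lift_le.2 hκ

lemma forward_dir (h : tNum.{0} = bNum) :
    ∃ T : {α : Ordinal.{u} // α < tNum.{u}.ord} → Set ℕ, IsUnboundedTower tNum.{u} T := by
  have h0ne : tSet.{0}.Nonempty := by
    apply tSet_nonempty_of_ne_zero
    rw [h]; exact bNum_ne_zero
  have hmem0 : tNum.{0} ∈ tSet.{0} := by rw [tNum_def]; exact csInf_mem h0ne
  have hmemu : Cardinal.lift.{u} tNum.{0} ∈ tSet.{u} := tSet_ascent hmem0
  have hune : tSet.{u}.Nonempty := ⟨_, hmemu⟩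
  have hle1 : tNum.{u} ≤ Cardinal.lift.{u} tNum.{0} := csInf_le (OrderBot.bddBelow _) hmemu
  have hle2 : Cardinal.lift.{u} tNum.{0} ≤ tNum.{u} := by
    rw [tNum_def]
    exact le_csInf hune (fun κ hκ => lift_tNum_le_mem hκ)
  have heq : tNum.{u} = Cardinal.lift.{u} bNum := by
    rw [le_antisymm hle1 hle2, h]
  obtain ⟨S, hS, hmk⟩ := exists_ubdd_family
  obtain ⟨e⟩ := index_equiv (κ := tNum.{u}) hmk heq
  obtain ⟨T, h1, h2, h3, h4⟩ := exists_tower le_rfl (fun α => (e α : ℕ → ℕ))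
  refine ⟨T, h1, h2, fun α β hab hfin => (h3 α β hab) hfin, ?_⟩
  rintro ⟨g, hg⟩
  apply hS
  refine ⟨g, fun s hs => ?_⟩
  set α := e.symm ⟨s, hs⟩ with hα
  have hsα : (e α : ℕ → ℕ) = s := by rw [hα, Equiv.apply_symm_apply]
  have hEv : EvLE (enumOf (T α)) g := hg _ ⟨α, rfl⟩
  refine Filter.Eventually.mono hEv (fun m hm => le_trans ?_ hm)
  calc s m = (e α : ℕ → ℕ) m := by rw [hsα]
    _ ≤ mstar (e α : ℕ → ℕ) (2 ^ m) := le_mstar _ (Nat.le_of_lt (Nat.lt_two_pow_self (n := m)))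
    _ ≤ enumOf (T α) m := h4 α m

lemma backward_dir (T : {α : Ordinal.{u} // α < tNum.{u}.ord} → Set ℕ)
    (hT : IsUnboundedTower tNum.{u} T) : tNum.{0} = bNum := by
  have h1 : bNum ≤ Cardinal.mk (Set.range fun α => enumOf (T α)) :=
    csInf_le (OrderBot.bddBelow _) ⟨_, hT.2.2.2, rfl⟩
  have h2 := Cardinal.mk_range_le_lift (f := fun α : {α : Ordinal.{u} // α < tNum.{u}.ord} =>
    enumOf (T α))
  rw [index_card] at h2
  have h2' : Cardinal.lift.{u+1} (Cardinal.mk (Set.range fun α => enumOf (T α))) ≤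
      Cardinal.lift.{u+1} tNum.{u} := by simpa using h2
  have hbt : Cardinal.lift.{u+1} bNum ≤ Cardinal.lift.{u+1} tNum.{u} :=
    (Cardinal.lift_le.2 h1).trans h2'
  have hbt' : Cardinal.lift.{u} bNum ≤ tNum.{u} := by
    apply Cardinal.lift_le.{u+1}.1
    simpa using hbt
  have heq : tNum.{u} = Cardinal.lift.{u} bNum := le_antisymm tNum_le_lift_bNum hbt'
  have hne : tNum.{u} ≠ 0 := by
    rw [heq]
    simp [bNum_ne_zero]
  have hune := tSet_nonempty_of_ne_zero hne
  have hmemu : tNum.{u} ∈ tSet.{u} := by rw [tNum_def]; exact csInf_mem hune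
  rw [heq] at hmemu
  have hb0 : bNum ∈ tSet.{0} := tSet_descent hmemu
  have hmem0 : tNum.{0} ∈ tSet.{0} := by rw [tNum_def]; exact csInf_mem ⟨_, hb0⟩
  have hasc : Cardinal.lift.{u} tNum.{0} ∈ tSet.{u} := tSet_ascent hmem0
  have hle : tNum.{u} ≤ Cardinal.lift.{u} tNum.{0} := csInf_le (OrderBot.bddBelow _) hasc
  rw [heq] at hle
  exact le_antisymm tNum_le_bNum (Cardinal.lift_le.1 hle)

/-- 𝔱 = 𝔟 if and only if there is an unbounded tower of cardinality 𝔱. -/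
theorem tNum_eq_bNum_iff :
    tNum = bNum ↔
      ∃ T : {α : Ordinal // α < tNum.ord} → Set ℕ, IsUnboundedTower tNum T :=
  ⟨fun h => forward_dir h, fun ⟨T, hT⟩ => backward_dir T hT⟩
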